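/- arXiv:1103.5121 — 3 statements merged into one kernel-verified Lean document; each statement's English description precedes it below -/
import Mathlib

section
/- Two first infinitesimal deformations (μ_0, μ_1) and (μ_0, μ̃_1) of the lax monoidal structure on F are equivalent (i.e. there exists a natural transformation φ_1^X : FX → FX with μ̃_1^{X,Y} - μ_1^{X,Y} = φ_1^{X⊗Y} μ^{X,Y} - μ^{X,Y}(φ_1^X ⊗ id) - μ^{X,Y}(id ⊗ φ_1^Y)) if and only if the 2-cocycles μ_1 and μ̃_1 differ by a Hochschild coboundary. Consequently, equivalence classes of first infinitesimal deformations of F are in bijection with the second Hochschild cohomology group H²(F). -/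
open CategoryTheory MonoidalCategory Functor.LaxMonoidal

namespace MonoidalHochschild

variable {C D : Type*} [Category C] [Category D] [MonoidalCategory C] [MonoidalCategory D]
  [Preadditive D] [MonoidalPreadditive D]

variable (F : C ⥤ D) [F.LaxMonoidal]

/-- A Hochschild `2`-cochain of the monoidal functor `F`: a family of morphisms
`F X ⊗ F Y ⟶ F (X ⊗ Y)` (naturality is imposed separately). -/
abbrev Fam2 := ∀ X Y : C, F.obj X ⊗ F.obj Y ⟶ F.obj (X ⊗ Y)

/-- Naturality of a `1`-cochain. -/
def Nat1 (b : ∀ X : C, F.obj X ⟶ F.obj X) : Prop :=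
  ∀ {X Y : C} (f : X ⟶ Y), b X ≫ F.map f = F.map f ≫ b Y

/-- Naturality of a `2`-cochain. -/
def Nat2 (c : Fam2 F) : Prop :=
  ∀ {X X' Y Y' : C} (f : X ⟶ X') (g : Y ⟶ Y'),
    (F.map f ⊗ₘ F.map g) ≫ c X' Y' = c X Y ≫ F.map (f ⊗ₘ g)

/-- The Hochschild differential on `1`-cochains:
`(db)^{X,Y} = b^{X⊗Y} ∘ μ^{X,Y} - μ^{X,Y} ∘ (b^X ⊗ id) - μ^{X,Y} ∘ (id ⊗ b^Y)`. -/
def d1 (b : ∀ X : C, F.obj X ⟶ F.obj X) : Fam2 F := fun X Y =>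
  μ F X Y ≫ b (X ⊗ Y) - (b X ▷ F.obj Y) ≫ μ F X Y - (F.obj X ◁ b Y) ≫ μ F X Y

/-- The Hochschild differential on `2`-cochains (associators made explicit):
`(dc)^{X,Y,Z} = -μ(id ⊗ c) + c^{X⊗Y,Z}(μ ⊗ id) - c^{X,Y⊗Z}(id ⊗ μ) + μ(c ⊗ id)`. -/
def d2 (c : Fam2 F) :
    ∀ X Y Z : C, F.obj X ⊗ (F.obj Y ⊗ F.obj Z) ⟶ F.obj (X ⊗ (Y ⊗ Z)) := fun X Y Z =>
  - ((F.obj X ◁ c Y Z) ≫ μ F X (Y ⊗ Z))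
  + ((α_ (F.obj X) (F.obj Y) (F.obj Z)).inv ≫ (μ F X Y ▷ F.obj Z) ≫
      c (X ⊗ Y) Z ≫ F.map (α_ X Y Z).hom)
  - ((F.obj X ◁ μ F Y Z) ≫ c X (Y ⊗ Z))
  + ((α_ (F.obj X) (F.obj Y) (F.obj Z)).inv ≫ (c X Y ▷ F.obj Z) ≫
      μ F (X ⊗ Y) Z ≫ F.map (α_ X Y Z).hom)

/-- The Hochschild differential on `3`-cochains (associators made explicit):
`(dc)^{W,X,Y,Z} = μ(id⊗c) - c(μ⊗id⊗id) + c(id⊗μ⊗id) - c(id⊗id⊗μ) + μ(c⊗id)`. -/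
def d3 (c : ∀ X Y Z : C, F.obj X ⊗ (F.obj Y ⊗ F.obj Z) ⟶ F.obj (X ⊗ (Y ⊗ Z))) :
    ∀ W X Y Z : C,
      F.obj W ⊗ (F.obj X ⊗ (F.obj Y ⊗ F.obj Z)) ⟶ F.obj (W ⊗ (X ⊗ (Y ⊗ Z))) :=
  fun W X Y Z =>
  ((F.obj W ◁ c X Y Z) ≫ μ F W (X ⊗ (Y ⊗ Z)))
  - ((α_ (F.obj W) (F.obj X) (F.obj Y ⊗ F.obj Z)).inv ≫ ((μ F W X) ▷ (F.obj Y ⊗ F.obj Z)) ≫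
      c (W ⊗ X) Y Z ≫ F.map (α_ W X (Y ⊗ Z)).hom)
  + ((F.obj W ◁ ((α_ (F.obj X) (F.obj Y) (F.obj Z)).inv ≫ (μ F X Y ▷ F.obj Z))) ≫
      c W (X ⊗ Y) Z ≫ F.map (W ◁ (α_ X Y Z).hom))
  - ((F.obj W ◁ (F.obj X ◁ μ F Y Z)) ≫ c W X (Y ⊗ Z))
  + ((F.obj W ◁ (α_ (F.obj X) (F.obj Y) (F.obj Z)).inv) ≫
      (α_ (F.obj W) (F.obj X ⊗ F.obj Y) (F.obj Z)).inv ≫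
      (c W X Y ▷ F.obj Z) ≫ μ F (W ⊗ (X ⊗ Y)) Z ≫
      F.map ((α_ W (X ⊗ Y) Z).hom ≫ (W ◁ (α_ X Y Z).hom)))

end MonoidalHochschild

open CategoryTheory MonoidalCategory Functor.LaxMonoidal MonoidalHochschild

section

variable {C D : Type*} [Category C] [Category D] [MonoidalCategory C] [MonoidalCategory D]
  [Abelian C] [Abelian D] [MonoidalPreadditive C] [MonoidalPreadditive D]
  (F : C ⥤ D) [F.LaxMonoidal]

/-- First infinitesimal deformations of the lax monoidal structure of `F`:
natural 2-cochains `μ₁` satisfying the linearized associativity equation. -/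
def InfDef : Type _ :=
  { μ₁ : Fam2 F // Nat2 F μ₁ ∧ ∀ X Y Z : C,
      (F.obj X ◁ μ F Y Z) ≫ μ₁ X (Y ⊗ Z) + (F.obj X ◁ μ₁ Y Z) ≫ μ F X (Y ⊗ Z) =
      (α_ (F.obj X) (F.obj Y) (F.obj Z)).inv ≫ (μ F X Y ▷ F.obj Z) ≫
          μ₁ (X ⊗ Y) Z ≫ F.map (α_ X Y Z).hom
        + (α_ (F.obj X) (F.obj Y) (F.obj Z)).inv ≫ (μ₁ X Y ▷ F.obj Z) ≫
          μ F (X ⊗ Y) Z ≫ F.map (α_ X Y Z).hom }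

/-- Natural Hochschild 2-cocycles of `F`. -/
def TwoCocycle : Type _ :=
  { c : Fam2 F // Nat2 F c ∧ ∀ X Y Z : C, d2 F c X Y Z = 0 }

/-- Equivalence of first infinitesimal deformations (as in the paper, at order one):
`μ₁ + μ ∘ φ = μ̃₁ + μ ∘ (φ ⊗ id) + μ ∘ (id ⊗ φ)` for some natural `φ`. -/
def EquivDef (μ₁ μ₁' : InfDef F) : Prop :=
  ∃ φ : ∀ X : C, F.obj X ⟶ F.obj X, Nat1 F φ ∧ ∀ X Y : C,
    μ₁.1 X Y + μ F X Y ≫ φ (X ⊗ Y) =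
      μ₁'.1 X Y + (φ X ▷ F.obj Y) ≫ μ F X Y + (F.obj X ◁ φ Y) ≫ μ F X Y

/-- Cohomologous 2-cocycles: they differ by the coboundary of a natural 1-cochain. -/
def Cohomologous (c c' : TwoCocycle F) : Prop :=
  ∃ φ : ∀ X : C, F.obj X ⟶ F.obj X, Nat1 F φ ∧ ∀ X Y : C,
    c'.1 X Y - c.1 X Y = d1 F φ X Y

private lemma aux1 {G : Type*} [AddCommGroup G] {a a' p q r : G} (h : a + p = a' + q + r) :
    a' - a = p - q - r := by
  have h2 : a' - a - (p - q - r) = (a' + q + r) - (a + p) := by abel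
  rw [← h, sub_self] at h2
  exact sub_eq_zero.mp h2

private lemma aux1' {G : Type*} [AddCommGroup G] {a a' p q r : G} (h : a' - a = p - q - r) :
    a + p = a' + q + r := by
  have h2 : (a + p) - (a' + q + r) = (p - q - r) - (a' - a) := by abel
  rw [← h, sub_self] at h2
  exact sub_eq_zero.mp h2

private lemma aux2 {G : Type*} [AddCommGroup G] {A B C D : G} (h : C + A = B + D) :
    -A + B - C + D = 0 := by
  have h2 : -A + B - C + D = (B + D) - (C + A) := by abel
  rw [h2, ← h, sub_self]

private lemma aux2' {G : Type*} [AddCommGroup G] {A B C D : G} (h : -A + B - C + D = 0) :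
    C + A = B + D := by
  have h2 : (B + D) - (C + A) = -A + B - C + D := by abel
  rw [h] at h2
  exact (sub_eq_zero.mp h2).symm

/-- Two first infinitesimal deformations of the lax monoidal structure of `F`
are equivalent iff the corresponding 2-cocycles differ by a Hochschild coboundary; consequently
the equivalence classes of first infinitesimal deformations are in bijection with the second
Hochschild cohomology of the monoidal functor `F`. -/
theorem infinitesimal_deformations_and_H2 :
    (∀ μ₁ μ₁' : InfDef F, EquivDef F μ₁ μ₁' ↔
      (∃ φ : ∀ X : C, F.obj X ⟶ F.obj X, Nat1 F φ ∧ ∀ X Y : C,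
        μ₁'.1 X Y - μ₁.1 X Y = d1 F φ X Y)) ∧
    Nonempty (Quot (EquivDef F) ≃ Quot (Cohomologous F)) := by
  have key : ∀ μ₁ μ₁' : InfDef F, EquivDef F μ₁ μ₁' ↔
      (∃ φ : ∀ X : C, F.obj X ⟶ F.obj X, Nat1 F φ ∧ ∀ X Y : C,
        μ₁'.1 X Y - μ₁.1 X Y = d1 F φ X Y) := by
    intro μ₁ μ₁'
    constructor
    · rintro ⟨φ, hφ, h⟩
      exact ⟨φ, hφ, fun X Y => by simp only [d1]; exact aux1 (h X Y)⟩
    · rintro ⟨φ, hφ, h⟩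
      exact ⟨φ, hφ, fun X Y => aux1' (by simpa only [d1] using h X Y)⟩
  refine ⟨key, ?_⟩
  exact ⟨Quot.congr (Equiv.subtypeEquivRight (fun c =>
    ⟨fun h => ⟨h.1, fun X Y Z => by simp only [d2]; exact aux2 (h.2 X Y Z)⟩,
     fun h => ⟨h.1, fun X Y Z => aux2' (by simpa only [d2] using h.2 X Y Z)⟩⟩))
    (fun a b => (key a b).trans Iff.rfl)⟩

end
end

section
/- Let (μ_0,…,μ_n) be an n-th infinitesimal deformation of the lax monoidal structure on F (satisfying Σ_{i+j=k} μ_i^{X,Y⊗Z}(id ⊗ μ_j^{Y,Z}) = Σ_{i+j=k} μ_i^{X⊗Y,Z}(μ_j^{X,Y} ⊗ id) for 1 ≤ k ≤ n). Then the 3-cochain O^{X,Y,Z} := Σ_{j=1}^{n} [μ_{n+1-j}^{X,Y⊗Z}(id ⊗ μ_j^{Y,Z}) - μ_{n+1-j}^{X⊗Y,Z}(μ_j^{X,Y} ⊗ id)] is a Hochschild 3-cocycle: dO = 0. The deformation lifts to an (n+1)-st infinitesimal deformation if and only if O is a coboundary, i.e. O = dμ_{n+1} for some 2-cochain μ_{n+1}.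 -/
open CategoryTheory MonoidalCategory Functor.LaxMonoidal

open CategoryTheory MonoidalCategory Functor.LaxMonoidal MonoidalHochschild

/-! ### Auxiliary material for the proof -/

section CombAux

open Finset

variable {M : Type*} [AddCommGroup M]

theorem obstrAux_split3 (k : ℕ) (hk : 1 ≤ k) (f : ℕ → M) :
    ∑ p ∈ range (k+1), f p = f 0 + ∑ p ∈ Icc 1 (k-1), f p + f k := by
  rw [Finset.sum_range_succ, Finset.range_eq_Ico, Finset.sum_eq_sum_Ico_succ_bot (by omega)]
  have : Icc 1 (k-1) = Ico 1 k := by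
    rw [← Finset.Ico_add_one_right_eq_Icc]; congr 1; omega
  rw [this]

theorem obstrAux_flip (n : ℕ) (f : ℕ → ℕ → M) :
    ∑ i ∈ Icc 1 n, f i (n+1-i) = ∑ i ∈ Icc 1 n, f (n+1-i) i := by
  refine Finset.sum_nbij' (fun i => n+1-i) (fun i => n+1-i) ?_ ?_ ?_ ?_ ?_ <;>
    simp only [Finset.mem_Icc] <;> intro a ha <;> try omega
  congr 1 <;> omega

theorem obstrAux_conv (n : ℕ) (g : ℕ → ℕ → M) :
    ∑ i ∈ Icc 1 n, ∑ p ∈ Icc 1 (n-i), g i p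
      = ∑ x ∈ (Icc 1 n ×ˢ Icc 1 n).filter (fun x => x.1 + x.2 ≤ n), g x.1 x.2 := by
  rw [Finset.sum_filter, Finset.sum_product]
  refine sum_congr rfl fun i hi => ?_
  dsimp only
  rw [← Finset.sum_filter]
  refine sum_congr ?_ fun _ _ => rfl
  ext p
  rw [Finset.mem_Icc] at hi
  simp only [Finset.mem_Icc, Finset.mem_filter]
  omega

theorem obstrAux_rot (n : ℕ) (f : ℕ → ℕ → ℕ → M) :
    ∑ i ∈ Icc 1 n, ∑ p ∈ Icc 1 (n-i), f i p (n+1-i-p)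
      = ∑ i ∈ Icc 1 n, ∑ p ∈ Icc 1 (n-i), f p (n+1-i-p) i := by
  rw [obstrAux_conv n (fun i p => f i p (n+1-i-p)),
    obstrAux_conv n (fun i p => f p (n+1-i-p) i)]
  refine Finset.sum_nbij' (fun x => (n+1-x.1-x.2, x.1)) (fun x => (x.2, n+1-x.1-x.2))
    ?_ ?_ ?_ ?_ ?_ <;>
      intro x hx <;>
      simp only [Finset.mem_filter, Finset.mem_product, Finset.mem_Icc] at hx ⊢
  · omega
  · omega
  · ext <;> try dsimp only
    all_goals omega
  · ext <;> try dsimp only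
    all_goals omega
  · congr 1
    omega

theorem obstrAux_swap (n : ℕ) (f : ℕ → ℕ → ℕ → M) :
    ∑ i ∈ Icc 1 n, ∑ p ∈ Icc 1 (n-i), f p i (n+1-i-p)
      = ∑ i ∈ Icc 1 n, ∑ p ∈ Icc 1 (n-i), f p (n+1-i-p) i := by
  rw [obstrAux_conv n (fun i p => f p i (n+1-i-p)),
    obstrAux_conv n (fun i p => f p (n+1-i-p) i)]
  refine Finset.sum_nbij' (fun x => (n+1-x.1-x.2, x.2)) (fun x => (n+1-x.1-x.2, x.2))
    ?_ ?_ ?_ ?_ ?_ <;>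
      intro x hx <;>
      simp only [Finset.mem_filter, Finset.mem_product, Finset.mem_Icc] at hx ⊢
  · omega
  · omega
  · ext <;> try dsimp only
    all_goals omega
  · ext <;> try dsimp only
    all_goals omega
  · congr 1
    omega

theorem obstrAux_comb (n : ℕ) (A B Cc Dd E : ℕ → ℕ → ℕ → M)
    (h1 : ∀ i ∈ Icc 1 n, ∑ p ∈ range (n+2-i), (A i p (n+1-i-p) - B i p (n+1-i-p)) = 0)
    (h2 : ∀ i ∈ Icc 1 n, ∑ p ∈ range (n+2-i), (Cc i p (n+1-i-p) - Dd i p (n+1-i-p)) = 0)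
    (h3 : ∀ i ∈ Icc 1 n, ∑ p ∈ range (n+2-i), (E p i (n+1-i-p) - Dd p (n+1-i-p) i) = 0)
    (h4 : ∀ i ∈ Icc 1 n, ∑ p ∈ range (n+2-i), (B p (n+1-i-p) i - Cc p (n+1-i-p) i) = 0)
    (h5 : ∀ i ∈ Icc 1 n, ∑ p ∈ range (n+2-i), (A p (n+1-i-p) i - E p (n+1-i-p) i) = 0) :
    ∑ j ∈ Icc 1 n, (A 0 (n+1-j) j - B 0 (n+1-j) j + Cc 0 (n+1-j) j - Dd 0 (n+1-j) j
      - E (n+1-j) 0 j + Dd (n+1-j) j 0 + B (n+1-j) j 0 - Cc (n+1-j) j 0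
      - A (n+1-j) j 0 + E (n+1-j) j 0) = 0 := by
  have split : ∀ (g : ℕ → ℕ → M), ∑ i ∈ Icc 1 n, ∑ p ∈ range (n+2-i), g i p
      = ∑ i ∈ Icc 1 n, g i 0 + ∑ i ∈ Icc 1 n, ∑ p ∈ Icc 1 (n-i), g i p
        + ∑ i ∈ Icc 1 n, g i (n+1-i) := by
    intro g
    rw [← sum_add_distrib, ← sum_add_distrib]
    refine sum_congr rfl fun i hi => ?_
    rw [Finset.mem_Icc] at hi
    have hr : n+2-i = (n+1-i)+1 := by omega
    rw [hr, obstrAux_split3 (n+1-i) (by omega) (g i)]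
    have : Icc 1 (n+1-i-1) = Icc 1 (n-i) := by congr 1; omega
    rw [this]
  have S1 : ∑ i ∈ Icc 1 n, ∑ p ∈ range (n+2-i), (A i p (n+1-i-p) - B i p (n+1-i-p)) = 0 :=
    sum_eq_zero h1
  have S2 : ∑ i ∈ Icc 1 n, ∑ p ∈ range (n+2-i), (Cc i p (n+1-i-p) - Dd i p (n+1-i-p)) = 0 :=
    sum_eq_zero h2
  have S3 : ∑ i ∈ Icc 1 n, ∑ p ∈ range (n+2-i), (E p i (n+1-i-p) - Dd p (n+1-i-p) i) = 0 :=
    sum_eq_zero h3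
  have S4 : ∑ i ∈ Icc 1 n, ∑ p ∈ range (n+2-i), (B p (n+1-i-p) i - Cc p (n+1-i-p) i) = 0 :=
    sum_eq_zero h4
  have S5 : ∑ i ∈ Icc 1 n, ∑ p ∈ range (n+2-i), (A p (n+1-i-p) i - E p (n+1-i-p) i) = 0 :=
    sum_eq_zero h5
  rw [split] at S1 S2 S3 S4 S5
  calc ∑ j ∈ Icc 1 n, (A 0 (n+1-j) j - B 0 (n+1-j) j + Cc 0 (n+1-j) j - Dd 0 (n+1-j) j
      - E (n+1-j) 0 j + Dd (n+1-j) j 0 + B (n+1-j) j 0 - Cc (n+1-j) j 0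
      - A (n+1-j) j 0 + E (n+1-j) j 0)
      = (∑ j ∈ Icc 1 n, (A 0 (n+1-j) j - B 0 (n+1-j) j + Cc 0 (n+1-j) j - Dd 0 (n+1-j) j
      - E (n+1-j) 0 j + Dd (n+1-j) j 0 + B (n+1-j) j 0 - Cc (n+1-j) j 0
      - A (n+1-j) j 0 + E (n+1-j) j 0))
      + ((∑ i ∈ Icc 1 n, (A i 0 (n+1-i-0) - B i 0 (n+1-i-0)))
        + (∑ i ∈ Icc 1 n, ∑ p ∈ Icc 1 (n-i), (A i p (n+1-i-p) - B i p (n+1-i-p)))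
        + (∑ i ∈ Icc 1 n, (A i (n+1-i) (n+1-i-(n+1-i)) - B i (n+1-i) (n+1-i-(n+1-i)))))
      + ((∑ i ∈ Icc 1 n, (Cc i 0 (n+1-i-0) - Dd i 0 (n+1-i-0)))
        + (∑ i ∈ Icc 1 n, ∑ p ∈ Icc 1 (n-i), (Cc i p (n+1-i-p) - Dd i p (n+1-i-p)))
        + (∑ i ∈ Icc 1 n, (Cc i (n+1-i) (n+1-i-(n+1-i)) - Dd i (n+1-i) (n+1-i-(n+1-i)))))
      - ((∑ i ∈ Icc 1 n, (E 0 i (n+1-i-0) - Dd 0 (n+1-i-0) i))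
        + (∑ i ∈ Icc 1 n, ∑ p ∈ Icc 1 (n-i), (E p i (n+1-i-p) - Dd p (n+1-i-p) i))
        + (∑ i ∈ Icc 1 n, (E (n+1-i) i (n+1-i-(n+1-i)) - Dd (n+1-i) (n+1-i-(n+1-i)) i)))
      + ((∑ i ∈ Icc 1 n, (B 0 (n+1-i-0) i - Cc 0 (n+1-i-0) i))
        + (∑ i ∈ Icc 1 n, ∑ p ∈ Icc 1 (n-i), (B p (n+1-i-p) i - Cc p (n+1-i-p) i))
        + (∑ i ∈ Icc 1 n, (B (n+1-i) (n+1-i-(n+1-i)) i - Cc (n+1-i) (n+1-i-(n+1-i)) i)))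
      - ((∑ i ∈ Icc 1 n, (A 0 (n+1-i-0) i - E 0 (n+1-i-0) i))
        + (∑ i ∈ Icc 1 n, ∑ p ∈ Icc 1 (n-i), (A p (n+1-i-p) i - E p (n+1-i-p) i))
        + (∑ i ∈ Icc 1 n, (A (n+1-i) (n+1-i-(n+1-i)) i - E (n+1-i) (n+1-i-(n+1-i)) i))) := by
        rw [S1, S2, S3, S4, S5]; abel
    _ = 0 := by
        simp only [Nat.sub_self, Nat.sub_zero]
        simp only [sum_sub_distrib, sum_add_distrib]
        rw [obstrAux_rot n A, obstrAux_rot n B, obstrAux_rot n Cc, obstrAux_rot n Dd,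
          obstrAux_swap n E,
          obstrAux_flip n (fun a b => A a 0 b), obstrAux_flip n (fun a b => A a b 0),
          obstrAux_flip n (fun a b => B a 0 b), obstrAux_flip n (fun a b => B a b 0),
          obstrAux_flip n (fun a b => Cc a 0 b), obstrAux_flip n (fun a b => Cc a b 0),
          obstrAux_flip n (fun a b => Dd a 0 b), obstrAux_flip n (fun a b => Dd a b 0),
          obstrAux_flip n (fun a b => E 0 a b)]
        abel

end CombAux

namespace MonoidalHochschild

open Finset

set_option linter.unusedSectionVars false

variable {C D : Type*} [Category C] [Category D] [MonoidalCategory C] [MonoidalCategory D]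
  [Preadditive D] [MonoidalPreadditive D]

variable (F : C ⥤ D) [F.LaxMonoidal]

/-- The basic bracket `⟨a,b⟩^{X,Y,Z} = a(1 ⊗ b) - a(b ⊗ 1)` (with associators). -/
def br (a b : Fam2 F) : ∀ X Y Z : C, F.obj X ⊗ (F.obj Y ⊗ F.obj Z) ⟶ F.obj (X ⊗ (Y ⊗ Z)) :=
  fun X Y Z =>
    (F.obj X ◁ b Y Z) ≫ a X (Y ⊗ Z)
      - (α_ (F.obj X) (F.obj Y) (F.obj Z)).inv ≫ (b X Y ▷ F.obj Z) ≫
          a (X ⊗ Y) Z ≫ F.map (α_ X Y Z).hom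

section Trees

variable (p q r m : Fam2 F) (W X Y Z : C)

/-- the composite `p(w, q(x, r(y,z)))`. -/
def tRC : F.obj W ⊗ (F.obj X ⊗ (F.obj Y ⊗ F.obj Z)) ⟶ F.obj (W ⊗ (X ⊗ (Y ⊗ Z))) :=
  (F.obj W ◁ ((F.obj X ◁ r Y Z) ≫ q X (Y ⊗ Z))) ≫ p W (X ⊗ (Y ⊗ Z))

/-- the composite `p(w, q(r(x,y), z))`. -/
def tT2 : F.obj W ⊗ (F.obj X ⊗ (F.obj Y ⊗ F.obj Z)) ⟶ F.obj (W ⊗ (X ⊗ (Y ⊗ Z))) :=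
  (F.obj W ◁ ((α_ (F.obj X) (F.obj Y) (F.obj Z)).inv ≫ (r X Y ▷ F.obj Z) ≫
    q (X ⊗ Y) Z ≫ F.map (α_ X Y Z).hom)) ≫ p W (X ⊗ (Y ⊗ Z))

/-- the composite `p(q(w, r(x,y)), z)`. -/
def tT3 : F.obj W ⊗ (F.obj X ⊗ (F.obj Y ⊗ F.obj Z)) ⟶ F.obj (W ⊗ (X ⊗ (Y ⊗ Z))) :=
  (F.obj W ◁ (α_ (F.obj X) (F.obj Y) (F.obj Z)).inv) ≫
    (α_ (F.obj W) (F.obj X ⊗ F.obj Y) (F.obj Z)).inv ≫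
    (((F.obj W ◁ r X Y) ≫ q W (X ⊗ Y)) ▷ F.obj Z) ≫ p (W ⊗ (X ⊗ Y)) Z ≫
    F.map ((α_ W (X ⊗ Y) Z).hom ≫ (W ◁ (α_ X Y Z).hom))

/-- the composite `p(q(r(w,x), y), z)`. -/
def tLC : F.obj W ⊗ (F.obj X ⊗ (F.obj Y ⊗ F.obj Z)) ⟶ F.obj (W ⊗ (X ⊗ (Y ⊗ Z))) :=
  (F.obj W ◁ (α_ (F.obj X) (F.obj Y) (F.obj Z)).inv) ≫
    (α_ (F.obj W) (F.obj X ⊗ F.obj Y) (F.obj Z)).inv ≫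
    (((α_ (F.obj W) (F.obj X) (F.obj Y)).inv ≫ (r W X ▷ F.obj Y) ≫
        q (W ⊗ X) Y ≫ F.map (α_ W X Y).hom) ▷ F.obj Z) ≫ p (W ⊗ (X ⊗ Y)) Z ≫
    F.map ((α_ W (X ⊗ Y) Z).hom ≫ (W ◁ (α_ X Y Z).hom))

/-- the composite `p(q(w,x), r(y,z))`. -/
def tD : F.obj W ⊗ (F.obj X ⊗ (F.obj Y ⊗ F.obj Z)) ⟶ F.obj (W ⊗ (X ⊗ (Y ⊗ Z))) :=
  (α_ (F.obj W) (F.obj X) (F.obj Y ⊗ F.obj Z)).inv ≫ (q W X ▷ (F.obj Y ⊗ F.obj Z)) ≫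
    (F.obj (W ⊗ X) ◁ r Y Z) ≫ p (W ⊗ X) (Y ⊗ Z) ≫ F.map (α_ W X (Y ⊗ Z)).hom

theorem wL_sub {P Q R : D} (f g : Q ⟶ R) : P ◁ (f - g) = P ◁ f - P ◁ g := by
  have := Functor.map_sub (tensorLeft P) (f := f) (g := g)
  simpa using this

theorem sub_wR {Q R : D} (f g : Q ⟶ R) (P : D) : (f - g) ▷ P = f ▷ P - g ▷ P := by
  have := Functor.map_sub (tensorRight P) (f := f) (g := g)
  exact this

theorem ins1 :
    (F.obj W ◁ br F q r X Y Z) ≫ p W (X ⊗ (Y ⊗ Z)) =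
      tRC F p q r W X Y Z - tT2 F p q r W X Y Z := by
  rw [br, wL_sub, Preadditive.sub_comp]; rfl

theorem ins2 :
    (F.obj W ◁ (α_ (F.obj X) (F.obj Y) (F.obj Z)).inv) ≫
      (α_ (F.obj W) (F.obj X ⊗ F.obj Y) (F.obj Z)).inv ≫
      (br F q r W X Y ▷ F.obj Z) ≫ p (W ⊗ (X ⊗ Y)) Z ≫
      F.map ((α_ W (X ⊗ Y) Z).hom ≫ (W ◁ (α_ X Y Z).hom)) =
    tT3 F p q r W X Y Z - tLC F p q r W X Y Z := by
  rw [br, sub_wR, Preadditive.sub_comp, Preadditive.comp_sub, Preadditive.comp_sub]; rfl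

theorem ins3 (hp : Nat2 F p) :
    (α_ (F.obj W) (F.obj X) (F.obj Y ⊗ F.obj Z)).inv ≫ (m W X ▷ (F.obj Y ⊗ F.obj Z)) ≫
      br F p q (W ⊗ X) Y Z ≫ F.map (α_ W X (Y ⊗ Z)).hom =
    tD F p m q W X Y Z - tLC F p q m W X Y Z := by
  rw [br, Preadditive.sub_comp, Preadditive.comp_sub, Preadditive.comp_sub]
  congr 1
  · rw [tD]; simp [Category.assoc]
  · rw [tLC]
    have hp' := hp (α_ W X Y).hom (𝟙 Z)
    simp only [F.map_id, tensorHom_id] at hp'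
    rw [comp_whiskerRight, comp_whiskerRight, comp_whiskerRight]
    slice_rhs 6 7 => rw [hp']
    slice_rhs 1 3 => rw [MonoidalCategory.pentagon_inv]
    slice_lhs 2 3 => rw [associator_inv_naturality_left]
    simp only [Category.assoc, ← F.map_comp, MonoidalCategory.pentagon]

theorem ins4 (hp : Nat2 F p) :
    (F.obj W ◁ ((α_ (F.obj X) (F.obj Y) (F.obj Z)).inv ≫ (m X Y ▷ F.obj Z))) ≫
      br F p q W (X ⊗ Y) Z ≫ F.map (W ◁ (α_ X Y Z).hom) =
    tT2 F p q m W X Y Z - tT3 F p q m W X Y Z := by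
  rw [br, Preadditive.sub_comp, Preadditive.comp_sub]
  congr 1
  · have hp' := hp (𝟙 W) (α_ X Y Z).hom
    simp only [F.map_id, id_tensorHom] at hp'
    rw [tT2]
    simp only [MonoidalCategory.whiskerLeft_comp, Category.assoc, hp']
  · rw [tT3]
    rw [MonoidalCategory.whiskerLeft_comp]
    slice_lhs 2 3 => rw [associator_inv_naturality_middle]
    simp [comp_whiskerRight, Category.assoc]

theorem ins5 :
    (F.obj W ◁ (F.obj X ◁ m Y Z)) ≫ br F p q W X (Y ⊗ Z) =
    tRC F p q m W X Y Z - tD F p q m W X Y Z := by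
  rw [br, Preadditive.comp_sub]
  congr 1
  · rw [tRC, MonoidalCategory.whiskerLeft_comp, Category.assoc]
  · rw [tD]
    slice_lhs 1 2 => rw [associator_inv_naturality_right]
    slice_lhs 2 3 => rw [whisker_exchange]
    simp [Category.assoc]

end Trees

theorem d3_br (a b : Fam2 F) (ha : Nat2 F a) (W X Y Z : C) :
    d3 F (br F a b) W X Y Z =
      tRC F (fun X Y => μ F X Y) a b W X Y Z - tT2 F (fun X Y => μ F X Y) a b W X Y Z
      + tT3 F (fun X Y => μ F X Y) a b W X Y Z - tLC F (fun X Y => μ F X Y) a b W X Y Z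
      - tD F a (fun X Y => μ F X Y) b W X Y Z + tLC F a b (fun X Y => μ F X Y) W X Y Z
      + tT2 F a b (fun X Y => μ F X Y) W X Y Z - tT3 F a b (fun X Y => μ F X Y) W X Y Z
      - tRC F a b (fun X Y => μ F X Y) W X Y Z + tD F a b (fun X Y => μ F X Y) W X Y Z := by
  have h1 : (F.obj W ◁ br F a b X Y Z) ≫ μ F W (X ⊗ (Y ⊗ Z)) =
      tRC F (fun X Y => μ F X Y) a b W X Y Z - tT2 F (fun X Y => μ F X Y) a b W X Y Z :=
    ins1 F (fun X Y => μ F X Y) a b W X Y Z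
  have h2 : (α_ (F.obj W) (F.obj X) (F.obj Y ⊗ F.obj Z)).inv ≫
        (μ F W X ▷ (F.obj Y ⊗ F.obj Z)) ≫
        br F a b (W ⊗ X) Y Z ≫ F.map (α_ W X (Y ⊗ Z)).hom =
      tD F a (fun X Y => μ F X Y) b W X Y Z - tLC F a b (fun X Y => μ F X Y) W X Y Z :=
    ins3 F a b (fun X Y => μ F X Y) W X Y Z ha
  have h3 : (F.obj W ◁ ((α_ (F.obj X) (F.obj Y) (F.obj Z)).inv ≫ (μ F X Y ▷ F.obj Z))) ≫
        br F a b W (X ⊗ Y) Z ≫ F.map (W ◁ (α_ X Y Z).hom) =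
      tT2 F a b (fun X Y => μ F X Y) W X Y Z - tT3 F a b (fun X Y => μ F X Y) W X Y Z :=
    ins4 F a b (fun X Y => μ F X Y) W X Y Z ha
  have h4 : (F.obj W ◁ (F.obj X ◁ μ F Y Z)) ≫ br F a b W X (Y ⊗ Z) =
      tRC F a b (fun X Y => μ F X Y) W X Y Z - tD F a b (fun X Y => μ F X Y) W X Y Z :=
    ins5 F a b (fun X Y => μ F X Y) W X Y Z
  have h5 : (F.obj W ◁ (α_ (F.obj X) (F.obj Y) (F.obj Z)).inv) ≫
        (α_ (F.obj W) (F.obj X ⊗ F.obj Y) (F.obj Z)).inv ≫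
        (br F a b W X Y ▷ F.obj Z) ≫ μ F (W ⊗ (X ⊗ Y)) Z ≫
        F.map ((α_ W (X ⊗ Y) Z).hom ≫ (W ◁ (α_ X Y Z).hom)) =
      tT3 F (fun X Y => μ F X Y) a b W X Y Z - tLC F (fun X Y => μ F X Y) a b W X Y Z :=
    ins2 F (fun X Y => μ F X Y) a b W X Y Z
  rw [d3, h1, h2, h3, h4, h5]
  abel

theorem d3_sum {ι : Type*} (s : Finset ι)
    (c : ι → ∀ X Y Z : C, F.obj X ⊗ (F.obj Y ⊗ F.obj Z) ⟶ F.obj (X ⊗ (Y ⊗ Z)))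
    (W X Y Z : C) :
    d3 F (fun X Y Z => ∑ j ∈ s, c j X Y Z) W X Y Z = ∑ j ∈ s, d3 F (c j) W X Y Z := by
  simp only [d3, CategoryTheory.whiskerLeft_sum, CategoryTheory.sum_whiskerRight,
    Preadditive.sum_comp, Preadditive.comp_sum, sum_sub_distrib, sum_add_distrib]

end MonoidalHochschild

open CategoryTheory MonoidalCategory Functor.LaxMonoidal MonoidalHochschild

section

open Finset

set_option linter.unusedSectionVars false

variable {C D : Type*} [Category C] [Category D] [MonoidalCategory C] [MonoidalCategory D]
  [Abelian C] [Abelian D] [MonoidalPreadditive C] [MonoidalPreadditive D]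
  (F : C ⥤ D) [F.LaxMonoidal]

/-- The order-`k` deformation equation
`Σ_{i+j=k} μᵢ^{X,Y⊗Z}(id ⊗ μⱼ^{Y,Z}) = Σ_{i+j=k} μᵢ^{X⊗Y,Z}(μⱼ^{X,Y} ⊗ id)`
(associators made explicit). -/
def OrderEq (μs : ℕ → Fam2 F) (k : ℕ) : Prop :=
  ∀ X Y Z : C,
    (∑ i ∈ Finset.range (k + 1),
      (F.obj X ◁ μs (k - i) Y Z) ≫ μs i X (Y ⊗ Z)) =
    (∑ i ∈ Finset.range (k + 1),
      (α_ (F.obj X) (F.obj Y) (F.obj Z)).inv ≫ (μs (k - i) X Y ▷ F.obj Z) ≫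
        μs i (X ⊗ Y) Z ≫ F.map (α_ X Y Z).hom)

/-- The obstruction 3-cochain
`O^{X,Y,Z} = Σ_{j=1}^{n} [μ_{n+1-j}^{X,Y⊗Z}(id ⊗ μⱼ^{Y,Z}) - μ_{n+1-j}^{X⊗Y,Z}(μⱼ^{X,Y} ⊗ id)]`. -/
def Obstruction (μs : ℕ → Fam2 F) (n : ℕ) :
    ∀ X Y Z : C, F.obj X ⊗ (F.obj Y ⊗ F.obj Z) ⟶ F.obj (X ⊗ (Y ⊗ Z)) := fun X Y Z =>
  ∑ j ∈ Finset.Icc 1 n,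
    ((F.obj X ◁ μs j Y Z) ≫ μs (n + 1 - j) X (Y ⊗ Z)
      - (α_ (F.obj X) (F.obj Y) (F.obj Z)).inv ≫ (μs j X Y ▷ F.obj Z) ≫
          μs (n + 1 - j) (X ⊗ Y) Z ≫ F.map (α_ X Y Z).hom)

theorem obstrAux_orderEq_iff (μs : ℕ → Fam2 F) (k : ℕ) :
    OrderEq F μs k ↔
      ∀ X Y Z : C, ∑ i ∈ range (k+1), br F (μs i) (μs (k-i)) X Y Z = 0 := by
  unfold OrderEq br
  constructor <;> intro h X Y Z <;> have hh := h X Y Z <;>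
    simp only [sum_sub_distrib, sub_eq_zero] at hh ⊢ <;> exact hh

theorem obstrAux_obstruction_eq (μs : ℕ → Fam2 F) (n : ℕ) :
    Obstruction F μs n = fun X Y Z => ∑ j ∈ Icc 1 n, br F (μs (n+1-j)) (μs j) X Y Z := rfl

theorem obstrAux_part1 (μs : ℕ → Fam2 F) (n : ℕ)
    (h0 : μs 0 = fun X Y => μ F X Y)
    (hnat : ∀ i, Nat2 F (μs i))
    (hdef : ∀ k, 1 ≤ k → k ≤ n → OrderEq F μs k) :
    ∀ W X Y Z : C, d3 F (Obstruction F μs n) W X Y Z = 0 := by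
  intro W X Y Z
  have hOr : ∀ k, 1 ≤ k → k ≤ n → ∀ X Y Z : C,
      ∑ i ∈ range (k+1), br F (μs i) (μs (k-i)) X Y Z = 0 := fun k hk1 hk2 =>
    (obstrAux_orderEq_iff F μs k).mp (hdef k hk1 hk2)
  have hObs : d3 F (Obstruction F μs n) W X Y Z
      = ∑ j ∈ Icc 1 n, d3 F (br F (μs (n+1-j)) (μs j)) W X Y Z :=
    d3_sum F (Icc 1 n) (fun j => br F (μs (n+1-j)) (μs j)) W X Y Z
  have hstep : ∀ j, d3 F (br F (μs (n+1-j)) (μs j)) W X Y Z =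
      tRC F (μs 0) (μs (n+1-j)) (μs j) W X Y Z - tT2 F (μs 0) (μs (n+1-j)) (μs j) W X Y Z
      + tT3 F (μs 0) (μs (n+1-j)) (μs j) W X Y Z - tLC F (μs 0) (μs (n+1-j)) (μs j) W X Y Z
      - tD F (μs (n+1-j)) (μs 0) (μs j) W X Y Z + tLC F (μs (n+1-j)) (μs j) (μs 0) W X Y Z
      + tT2 F (μs (n+1-j)) (μs j) (μs 0) W X Y Z - tT3 F (μs (n+1-j)) (μs j) (μs 0) W X Y Z
      - tRC F (μs (n+1-j)) (μs j) (μs 0) W X Y Z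
      + tD F (μs (n+1-j)) (μs j) (μs 0) W X Y Z := by
    intro j
    rw [d3_br F (μs (n+1-j)) (μs j) (hnat _) W X Y Z, ← h0]
  rw [hObs]
  rw [sum_congr rfl fun j _ => hstep j]
  refine obstrAux_comb n
    (fun i p r => tRC F (μs i) (μs p) (μs r) W X Y Z)
    (fun i p r => tT2 F (μs i) (μs p) (μs r) W X Y Z)
    (fun i p r => tT3 F (μs i) (μs p) (μs r) W X Y Z)
    (fun i p r => tLC F (μs i) (μs p) (μs r) W X Y Z)
    (fun i p r => tD F (μs i) (μs p) (μs r) W X Y Z)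
    ?_ ?_ ?_ ?_ ?_ <;>
    intro i hi <;> rw [Finset.mem_Icc] at hi <;>
    have hb := hOr (n+1-i) (by omega) (by omega) <;>
    have hr : n+2-i = (n+1-i)+1 := by omega
  · calc ∑ p ∈ range (n+2-i),
          (tRC F (μs i) (μs p) (μs (n+1-i-p)) W X Y Z
            - tT2 F (μs i) (μs p) (μs (n+1-i-p)) W X Y Z)
        = ∑ p ∈ range (n+2-i),
            (F.obj W ◁ br F (μs p) (μs (n+1-i-p)) X Y Z) ≫ μs i W (X ⊗ (Y ⊗ Z)) :=
          sum_congr rfl fun p _ => (ins1 F (μs i) (μs p) (μs (n+1-i-p)) W X Y Z).symm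
      _ = (F.obj W ◁ (∑ p ∈ range (n+2-i), br F (μs p) (μs (n+1-i-p)) X Y Z)) ≫
            μs i W (X ⊗ (Y ⊗ Z)) := by
          rw [CategoryTheory.whiskerLeft_sum, Preadditive.sum_comp]
      _ = 0 := by rw [hr, hb X Y Z]; simp
  · calc ∑ p ∈ range (n+2-i),
          (tT3 F (μs i) (μs p) (μs (n+1-i-p)) W X Y Z
            - tLC F (μs i) (μs p) (μs (n+1-i-p)) W X Y Z)
        = ∑ p ∈ range (n+2-i),
            (F.obj W ◁ (α_ (F.obj X) (F.obj Y) (F.obj Z)).inv) ≫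
              (α_ (F.obj W) (F.obj X ⊗ F.obj Y) (F.obj Z)).inv ≫
              (br F (μs p) (μs (n+1-i-p)) W X Y ▷ F.obj Z) ≫ μs i (W ⊗ (X ⊗ Y)) Z ≫
              F.map ((α_ W (X ⊗ Y) Z).hom ≫ (W ◁ (α_ X Y Z).hom)) :=
          sum_congr rfl fun p _ => (ins2 F (μs i) (μs p) (μs (n+1-i-p)) W X Y Z).symm
      _ = (F.obj W ◁ (α_ (F.obj X) (F.obj Y) (F.obj Z)).inv) ≫
              (α_ (F.obj W) (F.obj X ⊗ F.obj Y) (F.obj Z)).inv ≫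
              ((∑ p ∈ range (n+2-i), br F (μs p) (μs (n+1-i-p)) W X Y) ▷ F.obj Z) ≫
              μs i (W ⊗ (X ⊗ Y)) Z ≫
              F.map ((α_ W (X ⊗ Y) Z).hom ≫ (W ◁ (α_ X Y Z).hom)) := by
          simp only [CategoryTheory.sum_whiskerRight, Preadditive.sum_comp,
            Preadditive.comp_sum]
      _ = 0 := by rw [hr, hb W X Y]; simp
  · calc ∑ p ∈ range (n+2-i),
          (tD F (μs p) (μs i) (μs (n+1-i-p)) W X Y Z
            - tLC F (μs p) (μs (n+1-i-p)) (μs i) W X Y Z)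
        = ∑ p ∈ range (n+2-i),
            (α_ (F.obj W) (F.obj X) (F.obj Y ⊗ F.obj Z)).inv ≫
              (μs i W X ▷ (F.obj Y ⊗ F.obj Z)) ≫
              br F (μs p) (μs (n+1-i-p)) (W ⊗ X) Y Z ≫ F.map (α_ W X (Y ⊗ Z)).hom :=
          sum_congr rfl fun p _ =>
            (ins3 F (μs p) (μs (n+1-i-p)) (μs i) W X Y Z (hnat p)).symm
      _ = (α_ (F.obj W) (F.obj X) (F.obj Y ⊗ F.obj Z)).inv ≫
              (μs i W X ▷ (F.obj Y ⊗ F.obj Z)) ≫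
              (∑ p ∈ range (n+2-i), br F (μs p) (μs (n+1-i-p)) (W ⊗ X) Y Z) ≫
              F.map (α_ W X (Y ⊗ Z)).hom := by
          simp only [Preadditive.sum_comp, Preadditive.comp_sum]
      _ = 0 := by rw [hr, hb (W ⊗ X) Y Z]; simp
  · calc ∑ p ∈ range (n+2-i),
          (tT2 F (μs p) (μs (n+1-i-p)) (μs i) W X Y Z
            - tT3 F (μs p) (μs (n+1-i-p)) (μs i) W X Y Z)
        = ∑ p ∈ range (n+2-i),
            (F.obj W ◁ ((α_ (F.obj X) (F.obj Y) (F.obj Z)).inv ≫ (μs i X Y ▷ F.obj Z))) ≫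
              br F (μs p) (μs (n+1-i-p)) W (X ⊗ Y) Z ≫ F.map (W ◁ (α_ X Y Z).hom) :=
          sum_congr rfl fun p _ =>
            (ins4 F (μs p) (μs (n+1-i-p)) (μs i) W X Y Z (hnat p)).symm
      _ = (F.obj W ◁ ((α_ (F.obj X) (F.obj Y) (F.obj Z)).inv ≫ (μs i X Y ▷ F.obj Z))) ≫
              (∑ p ∈ range (n+2-i), br F (μs p) (μs (n+1-i-p)) W (X ⊗ Y) Z) ≫
              F.map (W ◁ (α_ X Y Z).hom) := by
          simp only [Preadditive.sum_comp, Preadditive.comp_sum]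
      _ = 0 := by rw [hr, hb W (X ⊗ Y) Z]; simp
  · calc ∑ p ∈ range (n+2-i),
          (tRC F (μs p) (μs (n+1-i-p)) (μs i) W X Y Z
            - tD F (μs p) (μs (n+1-i-p)) (μs i) W X Y Z)
        = ∑ p ∈ range (n+2-i),
            (F.obj W ◁ (F.obj X ◁ μs i Y Z)) ≫ br F (μs p) (μs (n+1-i-p)) W X (Y ⊗ Z) :=
          sum_congr rfl fun p _ => (ins5 F (μs p) (μs (n+1-i-p)) (μs i) W X Y Z).symm
      _ = (F.obj W ◁ (F.obj X ◁ μs i Y Z)) ≫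
            (∑ p ∈ range (n+2-i), br F (μs p) (μs (n+1-i-p)) W X (Y ⊗ Z)) := by
          simp only [Preadditive.comp_sum]
      _ = 0 := by rw [hr, hb W X (Y ⊗ Z)]; simp

theorem obstrAux_part2 (μs : ℕ → Fam2 F) (n : ℕ)
    (h0 : μs 0 = fun X Y => μ F X Y) (ν : Fam2 F) :
    OrderEq F (fun m => if m = n + 1 then ν else μs m) (n + 1) ↔
      ∀ X Y Z : C, Obstruction F μs n X Y Z = d2 F ν X Y Z := by
  have hd2 : ∀ X Y Z : C, d2 F ν X Y Z =
      -(br F (μs 0) ν X Y Z + br F ν (μs 0) X Y Z) := by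
    intro X Y Z
    rw [h0]
    simp only [d2, br]
    abel
  have hsum : ∀ X Y Z : C,
      ∑ i ∈ range (n+1+1), br F ((fun m => if m = n + 1 then ν else μs m) i)
        ((fun m => if m = n + 1 then ν else μs m) (n+1-i)) X Y Z
      = Obstruction F μs n X Y Z + (br F (μs 0) ν X Y Z + br F ν (μs 0) X Y Z) := by
    intro X Y Z
    rw [obstrAux_split3 (n+1) (by omega)]
    have e0 : (if (0:ℕ) = n+1 then ν else μs 0) = μs 0 := if_neg (by omega)
    have e1 : (if n+1 = n+1 then ν else μs (n+1)) = ν := if_pos rfl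
    have e2 : n+1-(0:ℕ) = n+1 := by omega
    have e3 : n+1-(n+1) = 0 := by omega
    have emid : ∑ i ∈ Icc 1 (n+1-1),
        br F (if i = n+1 then ν else μs i) (if n+1-i = n+1 then ν else μs (n+1-i)) X Y Z
        = Obstruction F μs n X Y Z := by
      have h1 : Icc 1 (n+1-1) = Icc 1 n := by congr 1
      rw [h1]
      have h2 : ∀ i ∈ Icc 1 n,
          br F (if i = n+1 then ν else μs i) (if n+1-i = n+1 then ν else μs (n+1-i)) X Y Z
          = br F (μs i) (μs (n+1-i)) X Y Z := by
        intro i hi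
        rw [Finset.mem_Icc] at hi
        rw [if_neg (by omega), if_neg (by omega)]
      rw [sum_congr rfl h2, obstrAux_obstruction_eq]
      beta_reduce
      exact obstrAux_flip n (fun a b => br F (μs a) (μs b) X Y Z)
    beta_reduce
    simp only [Nat.sub_zero, Nat.sub_self, Nat.add_sub_cancel, e0, e1, if_true] at emid ⊢
    rw [emid]
    abel
  rw [obstrAux_orderEq_iff]
  constructor
  · intro h X Y Z
    have hh := h X Y Z
    rw [hsum X Y Z] at hh
    rw [hd2 X Y Z]
    exact eq_neg_of_add_eq_zero_left hh
  · intro h X Y Z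
    rw [hsum X Y Z]
    have := h X Y Z
    rw [hd2 X Y Z] at this
    rw [this]
    abel

/-- If `(μ₀,…,μₙ)` is an `n`-th infinitesimal deformation of the lax monoidal
structure of `F`, then the obstruction `O` is a Hochschild 3-cocycle, `dO = 0`; and the
deformation lifts to an `(n+1)`-st infinitesimal deformation iff `O` is a coboundary,
i.e. `O = dμ_{n+1}` for some (natural) 2-cochain `μ_{n+1}`. -/
theorem obstruction_is_three_cocycle_and_lifting_criterion
    (μs : ℕ → Fam2 F) (n : ℕ)
    (h0 : μs 0 = fun X Y => μ F X Y)
    (hnat : ∀ i, Nat2 F (μs i))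
    (hdef : ∀ k, 1 ≤ k → k ≤ n → OrderEq F μs k) :
    (∀ W X Y Z : C, d3 F (Obstruction F μs n) W X Y Z = 0) ∧
    ((∃ μnext : Fam2 F, Nat2 F μnext ∧
        OrderEq F (fun m => if m = n + 1 then μnext else μs m) (n + 1)) ↔
      (∃ μnext : Fam2 F, Nat2 F μnext ∧
        ∀ X Y Z : C, Obstruction F μs n X Y Z = d2 F μnext X Y Z)) := by
  refine ⟨obstrAux_part1 F μs n h0 hnat hdef, ?_⟩
  constructor
  · rintro ⟨ν, hν, h⟩
    exact ⟨ν, hν, (obstrAux_part2 F μs n h0 ν).mp h⟩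
  · rintro ⟨ν, hν, h⟩
    exact ⟨ν, hν, (obstrAux_part2 F μs n h0 ν).mpr h⟩

end
end

section
/- For a symmetric lax monoidal functor F : C ⥤ D with a formal deformation (μ_0, μ_1, …), the skew-symmetrization π := μ_1 - F(σ_C)μ_1σ_D of the first-order term satisfies the derivation identity: π^{X,Y⊗Z}(id ⊗ μ^{Y,Z}) - μ^{X⊗Y,Z}(π^{X,Y} ⊗ id) = F(σ_C^{Y,X} ⊗ id) μ^{Y,X⊗Z}(id ⊗ π^{X,Z})(σ_D^{FX,FY} ⊗ id), using only the order-1 deformation equation dμ_1 = 0 and the symmetry of μ = μ_0. -/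
open CategoryTheory MonoidalCategory Functor.LaxMonoidal

open CategoryTheory MonoidalCategory Functor.LaxMonoidal MonoidalHochschild

namespace MonoidalHochschild

variable {C D : Type*} [Category C] [Category D] [MonoidalCategory C] [MonoidalCategory D]
  [SymmetricCategory C] [SymmetricCategory D] [Preadditive D] [MonoidalPreadditive D]
  (F : C ⥤ D) [F.LaxMonoidal]

/-- `F` is a symmetric lax monoidal functor:
`F(σ_C^{X,Y}) ∘ μ^{X,Y} = μ^{Y,X} ∘ σ_D^{FX,FY}`. -/
def IsSymmetric : Prop :=
  ∀ X Y : C, μ F X Y ≫ F.map (β_ X Y).hom = (β_ (F.obj X) (F.obj Y)).hom ≫ μ F Y X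

/-- Skew symmetry of a bifunctor transformation `π`:
`π^{X,Y} = - F(σ_C^{Y,X}) ∘ π^{Y,X} ∘ σ_D^{FX,FY}`. -/
def Skew (π : Fam2 F) : Prop :=
  ∀ X Y : C, π X Y =
    - ((β_ (F.obj X) (F.obj Y)).hom ≫ π Y X ≫ F.map (β_ Y X).hom)

/-- The functorial Jacobi identity for `π` (associators made explicit):
`π^{X,Y⊗Z}(id ⊗ π^{Y,Z}) - π^{X⊗Y,Z}(π^{X,Y} ⊗ id)
  = F(σ_C^{Y,X} ⊗ id) π^{Y,X⊗Z}(id ⊗ π^{X,Z})(σ_D^{FX,FY} ⊗ id)`. -/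
def JacobiId (π : Fam2 F) : Prop :=
  ∀ X Y Z : C,
    (F.obj X ◁ π Y Z) ≫ π X (Y ⊗ Z)
      - (α_ (F.obj X) (F.obj Y) (F.obj Z)).inv ≫ (π X Y ▷ F.obj Z) ≫
          π (X ⊗ Y) Z ≫ F.map (α_ X Y Z).hom =
    (α_ (F.obj X) (F.obj Y) (F.obj Z)).inv ≫
      ((β_ (F.obj X) (F.obj Y)).hom ▷ F.obj Z) ≫
      (α_ (F.obj Y) (F.obj X) (F.obj Z)).hom ≫
      (F.obj Y ◁ π X Z) ≫ π Y (X ⊗ Z) ≫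
      F.map ((α_ Y X Z).inv ≫ ((β_ Y X).hom ▷ Z) ≫ (α_ X Y Z).hom)

/-- The functorial derivation identity for `π` with respect to `μ`:
`π^{X,Y⊗Z}(id ⊗ μ^{Y,Z}) - μ^{X⊗Y,Z}(π^{X,Y} ⊗ id)
  = F(σ_C^{Y,X} ⊗ id) μ^{Y,X⊗Z}(id ⊗ π^{X,Z})(σ_D^{FX,FY} ⊗ id)`. -/
def DerivationId (π : Fam2 F) : Prop :=
  ∀ X Y Z : C,
    (F.obj X ◁ μ F Y Z) ≫ π X (Y ⊗ Z)
      - (α_ (F.obj X) (F.obj Y) (F.obj Z)).inv ≫ (π X Y ▷ F.obj Z) ≫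
          μ F (X ⊗ Y) Z ≫ F.map (α_ X Y Z).hom =
    (α_ (F.obj X) (F.obj Y) (F.obj Z)).inv ≫
      ((β_ (F.obj X) (F.obj Y)).hom ▷ F.obj Z) ≫
      (α_ (F.obj Y) (F.obj X) (F.obj Z)).hom ≫
      (F.obj Y ◁ π X Z) ≫ μ F Y (X ⊗ Z) ≫
      F.map ((α_ Y X Z).inv ≫ ((β_ Y X).hom ▷ Z) ≫ (α_ X Y Z).hom)

end MonoidalHochschild

open MonoidalHochschild

/-- For a symmetric lax monoidal functor `F` with a first-order deformation
term `μ₁` satisfying only the order-1 deformation equation (`dμ₁ = 0`), the skew-symmetrization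
`π = μ₁ - F(σ_C)μ₁σ_D` satisfies the functorial derivation identity
`π^{X,Y⊗Z}(id ⊗ μ^{Y,Z}) - μ^{X⊗Y,Z}(π^{X,Y} ⊗ id)
  = F(σ_C^{Y,X} ⊗ id) μ^{Y,X⊗Z}(id ⊗ π^{X,Z})(σ_D^{FX,FY} ⊗ id)`. -/
theorem skew_symmetrization_satisfies_derivation
    {C D : Type*} [Category C] [Category D] [MonoidalCategory C] [MonoidalCategory D]
    [SymmetricCategory C] [SymmetricCategory D]
    [Abelian C] [Abelian D] [MonoidalPreadditive C] [MonoidalPreadditive D]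
    (F : C ⥤ D) [F.LaxMonoidal]
    (hFsym : IsSymmetric F)
    (μ₁ : Fam2 F) (hnat : Nat2 F μ₁)
    (hdef : ∀ X Y Z : C,
      (F.obj X ◁ μ F Y Z) ≫ μ₁ X (Y ⊗ Z) + (F.obj X ◁ μ₁ Y Z) ≫ μ F X (Y ⊗ Z) =
      (α_ (F.obj X) (F.obj Y) (F.obj Z)).inv ≫ (μ F X Y ▷ F.obj Z) ≫
          μ₁ (X ⊗ Y) Z ≫ F.map (α_ X Y Z).hom
        + (α_ (F.obj X) (F.obj Y) (F.obj Z)).inv ≫ (μ₁ X Y ▷ F.obj Z) ≫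
          μ F (X ⊗ Y) Z ≫ F.map (α_ X Y Z).hom) :
    letI π : Fam2 F := fun X Y =>
      μ₁ X Y - (β_ (F.obj X) (F.obj Y)).hom ≫ μ₁ Y X ≫ F.map (β_ Y X).hom
    DerivationId F π := by
  have wLsub : ∀ (P : D) {Q R : D} (f g : Q ⟶ R), P ◁ (f - g) = P ◁ f - P ◁ g := by
    intro P Q R f g
    rw [eq_sub_iff_add_eq, ← MonoidalPreadditive.whiskerLeft_add, sub_add_cancel]
  have wRsub : ∀ {Q R : D} (f g : Q ⟶ R) (P : D), (f - g) ▷ P = f ▷ P - g ▷ P := by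
    intro Q R f g P
    rw [eq_sub_iff_add_eq, ← MonoidalPreadditive.add_whiskerRight, sub_add_cancel]
  have hsym' : ∀ A B : C, μ F A B =
      (β_ (F.obj A) (F.obj B)).hom ≫ μ F B A ≫ F.map (β_ B A).hom := by
    intro A B
    rw [hFsym B A, SymmetricCategory.symmetry_assoc]
  have hnatL : ∀ {A A' : C} (f : A ⟶ A') (B : C), F.map f ▷ F.obj B ≫ μ₁ A' B
      = μ₁ A B ≫ F.map (f ▷ B) := by
    intro A A' f B
    simpa using hnat f (𝟙 B)
  have hnatR : ∀ (A : C) {B B' : C} (f : B ⟶ B'), F.obj A ◁ F.map f ≫ μ₁ A B'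
      = μ₁ A B ≫ F.map (A ◁ f) := by
    intro A B B' f
    simpa using hnat (𝟙 A) f
  intro X Y Z
  dsimp only
  simp only [wLsub, wRsub, Preadditive.comp_sub, Preadditive.sub_comp, Category.assoc]
  have hexC : (Y ◁ (β_ Z X).hom) ≫ (α_ Y X Z).inv ≫ ((β_ Y X).hom ▷ Z) ≫ (α_ X Y Z).hom
      = (α_ Y Z X).inv ≫ (β_ (Y ⊗ Z) X).hom := by
    rw [← reassoc_of% (BraidedCategory.hexagon_reverse Y Z X)]
    simp
  have hexD : (α_ (F.obj X) (F.obj Y) (F.obj Z)).inv ≫ ((β_ (F.obj X) (F.obj Y)).hom ▷ F.obj Z) ≫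
      (α_ (F.obj Y) (F.obj X) (F.obj Z)).hom ≫ (F.obj Y ◁ (β_ (F.obj X) (F.obj Z)).hom)
      = (β_ (F.obj X) (F.obj Y ⊗ F.obj Z)).hom ≫ (α_ (F.obj Y) (F.obj Z) (F.obj X)).hom := by
    rw [← BraidedCategory.hexagon_forward (F.obj X) (F.obj Y) (F.obj Z)]
    simp
  -- E2 : R'' + r1 = a1 + t4
  have E2 : ((α_ (F.obj X) (F.obj Y) (F.obj Z)).inv ≫ (β_ (F.obj X) (F.obj Y)).hom ▷ F.obj Z ≫
        (α_ (F.obj Y) (F.obj X) (F.obj Z)).hom ≫ F.obj Y ◁ μ F X Z ≫ μ₁ Y (X ⊗ Z) ≫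
        F.map ((α_ Y X Z).inv ≫ (β_ Y X).hom ▷ Z ≫ (α_ X Y Z).hom))
      + ((α_ (F.obj X) (F.obj Y) (F.obj Z)).inv ≫ (β_ (F.obj X) (F.obj Y)).hom ▷ F.obj Z ≫
        (α_ (F.obj Y) (F.obj X) (F.obj Z)).hom ≫ F.obj Y ◁ μ₁ X Z ≫ μ F Y (X ⊗ Z) ≫
        F.map ((α_ Y X Z).inv ≫ (β_ Y X).hom ▷ Z ≫ (α_ X Y Z).hom))
      = ((α_ (F.obj X) (F.obj Y) (F.obj Z)).inv ≫ μ F X Y ▷ F.obj Z ≫ μ₁ (X ⊗ Y) Z ≫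
          F.map (α_ X Y Z).hom)
      + ((α_ (F.obj X) (F.obj Y) (F.obj Z)).inv ≫
          ((β_ (F.obj X) (F.obj Y)).hom ≫ μ₁ Y X ≫ F.map (β_ Y X).hom) ▷ F.obj Z ≫
          μ F (X ⊗ Y) Z ≫ F.map (α_ X Y Z).hom) := by
    have h := congrArg (fun g => (α_ (F.obj X) (F.obj Y) (F.obj Z)).inv ≫
        ((β_ (F.obj X) (F.obj Y)).hom ▷ F.obj Z) ≫ (α_ (F.obj Y) (F.obj X) (F.obj Z)).hom ≫ g ≫
        F.map ((α_ Y X Z).inv ≫ ((β_ Y X).hom ▷ Z) ≫ (α_ X Y Z).hom)) (hdef Y X Z)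
    simp only [Preadditive.comp_add, Preadditive.add_comp, Category.assoc,
      Iso.hom_inv_id_assoc, ← F.map_comp] at h
    rw [← MonoidalCategory.comp_whiskerRight_assoc (β_ (F.obj X) (F.obj Y)).hom (μ F Y X)
        (F.obj Z), ← hFsym X Y, MonoidalCategory.comp_whiskerRight_assoc,
      reassoc_of% (hnatL (β_ X Y).hom Z), ← F.map_comp,
      ← MonoidalCategory.comp_whiskerRight_assoc (β_ X Y).hom (β_ Y X).hom Z,
      SymmetricCategory.symmetry, MonoidalCategory.id_whiskerRight, Category.id_comp] at h
    have mnl : μ F (Y ⊗ X) Z ≫ F.map ((β_ Y X).hom ▷ Z ≫ (α_ X Y Z).hom)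
        = F.map (β_ Y X).hom ▷ F.obj Z ≫ μ F (X ⊗ Y) Z ≫ F.map (α_ X Y Z).hom := by
      rw [F.map_comp, ← Functor.LaxMonoidal.μ_natural_left_assoc]
    rw [mnl] at h
    simp only [MonoidalCategory.comp_whiskerRight, Category.assoc]
    exact h
  -- E3 : a2 + t2 = R'' + r2
  have E3 : (F.obj X ◁ μ₁ Y Z ≫ μ F X (Y ⊗ Z))
      + (F.obj X ◁ μ F Y Z ≫ (β_ (F.obj X) (F.obj (Y ⊗ Z))).hom ≫ μ₁ (Y ⊗ Z) X ≫
          F.map (β_ (Y ⊗ Z) X).hom)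
      = ((α_ (F.obj X) (F.obj Y) (F.obj Z)).inv ≫ (β_ (F.obj X) (F.obj Y)).hom ▷ F.obj Z ≫
        (α_ (F.obj Y) (F.obj X) (F.obj Z)).hom ≫ F.obj Y ◁ μ F X Z ≫ μ₁ Y (X ⊗ Z) ≫
        F.map ((α_ Y X Z).inv ≫ (β_ Y X).hom ▷ Z ≫ (α_ X Y Z).hom))
      + ((α_ (F.obj X) (F.obj Y) (F.obj Z)).inv ≫ (β_ (F.obj X) (F.obj Y)).hom ▷ F.obj Z ≫
        (α_ (F.obj Y) (F.obj X) (F.obj Z)).hom ≫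
        F.obj Y ◁ ((β_ (F.obj X) (F.obj Z)).hom ≫ μ₁ Z X ≫ F.map (β_ Z X).hom) ≫
        μ F Y (X ⊗ Z) ≫ F.map ((α_ Y X Z).inv ≫ (β_ Y X).hom ▷ Z ≫ (α_ X Y Z).hom)) := by
    have h := congrArg (fun g => (β_ (F.obj X) (F.obj Y ⊗ F.obj Z)).hom ≫
        (α_ (F.obj Y) (F.obj Z) (F.obj X)).hom ≫ g ≫
        F.map ((α_ Y Z X).inv ≫ (β_ (Y ⊗ Z) X).hom)) (hdef Y Z X)
    simp only [Preadditive.comp_add, Preadditive.add_comp, Category.assoc,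
      Iso.hom_inv_id_assoc, ← F.map_comp] at h
    rw [hsym' X (Y ⊗ Z), hsym' X Z]
    simp only [MonoidalCategory.whiskerLeft_comp, Category.assoc,
      BraidedCategory.braiding_naturality_right_assoc]
    rw [reassoc_of% (hnatR Y (β_ Z X).hom)]
    simp only [Functor.LaxMonoidal.μ_natural_right_assoc, ← F.map_comp, Category.assoc]
    simp only [hexC, reassoc_of% hexD]
    rw [add_comm]
    exact h.symm
  have e1 := eq_sub_of_add_eq (hdef X Y Z)
  have e2 := eq_sub_of_add_eq ((add_comm _ _).trans E2)
  have e3 := eq_sub_of_add_eq ((add_comm _ _).trans E3.symm)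
  rw [e1, e2, e3]
  abel
end
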